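/- Intuitionistic propositional logic IPC has the propositional disjunctive interpolation property: for any IPC-provable formula φ → ψ ∨ θ, there exist formulas I and J whose variables are contained in the variables of φ, such that φ → (I ∨ J), I → ψ, and J → θ are all provable in IPC. Moreover, if φ is monotone (built from atoms, ⊤, ⊥, ∧, ∨ only), then I and J can be chosen monotone. -/

import Mathlib

/-! ## Basic machinery: strings, polynomial time, NP, circuits, formulas -/

/-- The trivial finite encoding of binary strings over the alphabet `Bool`. -/
def listBoolEncoding : Computability.Encoding (List Bool) Bool where
  encode := id
  decode := fun l => some l
  decode_encode := fun _ => rfl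

/-- A function on binary strings is polynomial-time computable if some
two-stack Turing machine computes it in polynomial time. -/
def PolyTimeComputable (f : List Bool → List Bool) : Prop :=
  Nonempty (Turing.TM2ComputableInPolyTime listBoolEncoding.encode listBoolEncoding.encode f)

/-- An injective pairing of binary strings. -/
def pairEnc (u w : List Bool) : List Bool :=
  (u.map fun b => [true, b]).flatten ++ false :: w

/-- A predicate on binary strings is polynomial-time decidable. -/
def PolyTimeDecidable (P : List Bool → Prop) : Prop :=
  ∃ f, PolyTimeComputable f ∧ ∀ w, P w ↔ f w = [true]

/-- A binary predicate on binary strings is polynomial-time decidable. -/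
def PolyTimeDecidable2 (P : List Bool → List Bool → Prop) : Prop :=
  ∃ f, PolyTimeComputable f ∧ ∀ u w, P u w ↔ f (pairEnc u w) = [true]

/-- `L ∈ NP`: there are a polynomial-time decidable binary predicate `R` and a
polynomial `p` with `w ∈ L` iff some witness `u` with `|u| ≤ p (|w|)` satisfies `R u w`. -/
def InNP (L : Set (List Bool)) : Prop :=
  ∃ (R : List Bool → List Bool → Prop) (p : Polynomial ℕ),
    PolyTimeDecidable2 R ∧ ∀ w, w ∈ L ↔ ∃ u, u.length ≤ p.eval w.length ∧ R u w

/-- `L ∈ P`. -/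
def InP (L : Set (List Bool)) : Prop := PolyTimeDecidable (· ∈ L)

/-- A gate of a Boolean circuit with `s` gates: a constant, an input gate reading
input variable `a : ℕ`, or a negation/conjunction/disjunction of earlier gates. -/
inductive CGate (s : ℕ) : Type where
  | const : Bool → CGate s
  | input : ℕ → CGate s
  | not : Fin s → CGate s
  | and : Fin s → Fin s → CGate s
  | or : Fin s → Fin s → CGate s

/-- The gates referenced by a gate. -/
def CGate.deps {s : ℕ} : CGate s → List (Fin s)
  | .const _ => []
  | .input _ => []
  | .not j => [j]
  | .and j k => [j, k]
  | .or j k => [j, k]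

/-- A Boolean circuit (as a DAG of gates, without a chosen output). -/
structure CircuitBase where
  size : ℕ
  gates : Fin size → CGate size
  wf : ∀ i : Fin size, ∀ j ∈ (gates i).deps, (j : ℕ) < (i : ℕ)

/-- Evaluate gate `i` of a circuit under an assignment `v` to the input variables. -/
def CircuitBase.evalGate (c : CircuitBase) (v : ℕ → Bool) (i : Fin c.size) : Bool :=
  match h : c.gates i with
  | .const b => b
  | .input a => v a
  | .not j => !(c.evalGate v j)
  | .and j k => c.evalGate v j && c.evalGate v k
  | .or j k => c.evalGate v j || c.evalGate v k
termination_by (i : ℕ)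
decreasing_by
  · exact c.wf i j (by rw [h]; simp [CGate.deps])
  · exact c.wf i j (by rw [h]; simp [CGate.deps])
  · exact c.wf i k (by rw [h]; simp [CGate.deps])
  · exact c.wf i j (by rw [h]; simp [CGate.deps])
  · exact c.wf i k (by rw [h]; simp [CGate.deps])

/-- The circuit reads only input variables from `S`. -/
def CircuitBase.InputsIn (c : CircuitBase) (S : Set ℕ) : Prop :=
  ∀ (i : Fin c.size) (a : ℕ), c.gates i = CGate.input a → a ∈ S

/-- A monotone circuit: no negation gates. -/
def CircuitBase.MonotoneC (c : CircuitBase) : Prop :=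
  ∀ (i j : Fin c.size), c.gates i ≠ CGate.not j

/-- A single-output Boolean circuit. -/
structure Circuit extends CircuitBase where
  out : Fin size

/-- Evaluate a circuit on an assignment to the input variables. -/
def Circuit.eval (c : Circuit) (v : ℕ → Bool) : Bool :=
  c.toCircuitBase.evalGate v c.out

/-- A multi-output Boolean circuit. -/
structure MultiCircuit extends CircuitBase where
  outs : List (Fin size)

/-- Evaluate a multi-output circuit on an assignment to the input variables. -/
def MultiCircuit.eval (c : MultiCircuit) (v : ℕ → Bool) : List Bool :=
  c.outs.map (c.toCircuitBase.evalGate v)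

/-- `pad_m(w) = 1w₁1w₂…1w_l 0…0` of total length `2m`. -/
def padBits (m : ℕ) (w : List Bool) : List Bool :=
  (w.map fun b => [true, b]).flatten ++ List.replicate (2 * m - 2 * w.length) false

/-- A function on binary strings is computable by polynomial-size circuits:
a family `Cₙ` of multi-output circuits of size polynomial in `n`, where
`Cₙ` reads input bits `0,…,n-1` and outputs the padded value of `f` on
every input of length `n`. -/
def PolySizeComputable (f : List Bool → List Bool) : Prop :=
  ∃ (C : ℕ → MultiCircuit) (outLen : ℕ → ℕ) (p : Polynomial ℕ),
    ∀ n, (C n).size ≤ p.eval n ∧ (C n).toCircuitBase.InputsIn {a | a < n} ∧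
      ∀ w : List Bool, w.length = n →
        (f w).length ≤ outLen n ∧
        (C n).eval (fun a => w.getD a false) = padBits (outLen n) (f w)

/-- `L ∈ P/poly`: a polynomial-size circuit family decides membership in `L`. -/
def InPPoly (L : Set (List Bool)) : Prop :=
  ∃ (C : ℕ → Circuit) (p : Polynomial ℕ),
    ∀ n, (C n).size ≤ p.eval n ∧ (C n).toCircuitBase.InputsIn {a | a < n} ∧
      ∀ w : List Bool, w.length = n →
        (w ∈ L ↔ (C n).eval (fun a => w.getD a false) = true)

/-- A proof system for a language `L`: a polynomial-time decidable binary relation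
`Pr` such that `w ∈ L` iff `w` has a `Pr`-proof. -/
def IsProofSystem (Pr : List Bool → List Bool → Prop) (L : Set (List Bool)) : Prop :=
  PolyTimeDecidable2 Pr ∧ ∀ w, w ∈ L ↔ ∃ u, Pr u w

/-- A proof system is polynomially bounded if every member of `L` has a proof of
size polynomial in its length. -/
def PolyBounded (Pr : List Bool → List Bool → Prop) (L : Set (List Bool)) : Prop :=
  ∃ p : Polynomial ℕ, ∀ w ∈ L, ∃ u, Pr u w ∧ u.length ≤ p.eval w.length

/-- One-way protocols. -/
structure OneWayProtocol where
  /-- the polynomial-time decidable predicate of source data -/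
  Pred : List Bool → Prop
  /-- the public transformation -/
  h : List Bool → List Bool
  /-- the derived secret information -/
  k : List Bool → List Bool
  /-- computes (in unary) the length of `k u` from `h u` -/
  lenFun : List Bool → List Bool
  /-- the bounding polynomial -/
  bnd : Polynomial ℕ
  pred_dec : PolyTimeDecidable Pred
  h_poly : PolyTimeComputable h
  k_poly : PolyTimeComputable k
  lenFun_poly : PolyTimeComputable lenFun
  /-- semi-injectivity -/
  semi_inj : ∀ u₁ u₂, Pred u₁ → Pred u₂ → h u₁ = h u₂ → k u₁ = k u₂
  /-- `|k u|` is polynomial-time computable from `h u` -/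
  len_eq : ∀ u, (k u).length = (lenFun (h u)).length
  /-- boundedness: `|u| ≤ bnd (|h u|)` -/
  bounded : ∀ u, u.length ≤ bnd.eval (h u).length
  /-- security against `P/poly` adversaries -/
  secure : ¬ ∃ f : List Bool → List Bool, PolySizeComputable f ∧ ∀ u, k u = f (h u)

/-! ## Propositional formulas -/

/-- Propositional formulas over `{⊤, ⊥, ∧, ∨, →}` with variables indexed by `ℕ`. -/
inductive PropForm : Type where
  | tr : PropForm
  | fls : PropForm
  | var : ℕ → PropForm
  | and : PropForm → PropForm → PropForm
  | or : PropForm → PropForm → PropForm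
  | imp : PropForm → PropForm → PropForm
deriving DecidableEq

/-- Negation abbreviates `φ → ⊥`. -/
def PropForm.neg (φ : PropForm) : PropForm := φ.imp .fls

/-- Classical Boolean evaluation of a formula. -/
def PropForm.eval (v : ℕ → Bool) : PropForm → Bool
  | .tr => true
  | .fls => false
  | .var a => v a
  | .and φ ψ => φ.eval v && ψ.eval v
  | .or φ ψ => φ.eval v || ψ.eval v
  | .imp φ ψ => !(φ.eval v) || ψ.eval v

/-- A classical tautology. -/
def PropForm.Taut (φ : PropForm) : Prop := ∀ v, φ.eval v = true

/-- The variables occurring in a formula. -/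
def PropForm.vars : PropForm → Finset ℕ
  | .tr => ∅
  | .fls => ∅
  | .var a => {a}
  | .and φ ψ => φ.vars ∪ ψ.vars
  | .or φ ψ => φ.vars ∪ ψ.vars
  | .imp φ ψ => φ.vars ∪ ψ.vars

/-- The size of a formula. -/
def PropForm.size : PropForm → ℕ
  | .tr => 1
  | .fls => 1
  | .var _ => 1
  | .and φ ψ => φ.size + ψ.size + 1
  | .or φ ψ => φ.size + ψ.size + 1
  | .imp φ ψ => φ.size + ψ.size + 1

/-- Substitution of formulas for variables. -/
def PropForm.subst (σ : ℕ → PropForm) : PropForm → PropForm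
  | .tr => .tr
  | .fls => .fls
  | .var a => σ a
  | .and φ ψ => .and (φ.subst σ) (ψ.subst σ)
  | .or φ ψ => .or (φ.subst σ) (ψ.subst σ)
  | .imp φ ψ => .imp (φ.subst σ) (ψ.subst σ)

/-- A monotone formula: built from atoms, `⊤`, `⊥`, `∧`, `∨` only (no implication). -/
def PropForm.IsMonotone : PropForm → Prop
  | .tr => True
  | .fls => True
  | .var _ => True
  | .and φ ψ => φ.IsMonotone ∧ ψ.IsMonotone
  | .or φ ψ => φ.IsMonotone ∧ ψ.IsMonotone
  | .imp _ _ => False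

/-- `MonoIn P b φ` holds if every occurrence in `φ` of a variable from `P` has
polarity allowed by `b` (`b = true`: positive occurrences only are constrained;
a variable of `P` may occur with polarity `b` but not opposite).
`MonoIn P true φ` says `φ` is monotone in the variables of `P`
(no negated occurrence of a `P`-variable in negation normal form). -/
def MonoIn (P : Finset ℕ) : Bool → PropForm → Prop
  | _, .tr => True
  | _, .fls => True
  | b, .var a => b = true ∨ a ∉ P
  | b, .and φ ψ => MonoIn P b φ ∧ MonoIn P b ψ
  | b, .or φ ψ => MonoIn P b φ ∧ MonoIn P b ψ
  | b, .imp φ ψ => MonoIn P (!b) φ ∧ MonoIn P b ψ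

/-- Conjunction of a list of formulas. -/
def conjList (Γ : List PropForm) : PropForm := Γ.foldr PropForm.and .tr

/-- Disjunction of a list of formulas. -/
def disjList (Δ : List PropForm) : PropForm := Δ.foldr PropForm.or .fls

/-- `⋀_{i<m} (pᵢ ∨ ¬pᵢ)`. -/
def excludedMiddleConj (m : ℕ) : PropForm :=
  conjList ((List.range m).map fun i => (PropForm.var i).or (PropForm.var i).neg)

/-- Hilbert-style provability in intuitionistic propositional logic `IPC`. -/
inductive IPC : PropForm → Prop
  | mp {φ ψ : PropForm} : IPC (φ.imp ψ) → IPC φ → IPC ψ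
  | ax1 (φ ψ : PropForm) : IPC (φ.imp (ψ.imp φ))
  | ax2 (φ ψ χ : PropForm) : IPC ((φ.imp (ψ.imp χ)).imp ((φ.imp ψ).imp (φ.imp χ)))
  | axAndI (φ ψ : PropForm) : IPC (φ.imp (ψ.imp (φ.and ψ)))
  | axAndL (φ ψ : PropForm) : IPC ((φ.and ψ).imp φ)
  | axAndR (φ ψ : PropForm) : IPC ((φ.and ψ).imp ψ)
  | axOrL (φ ψ : PropForm) : IPC (φ.imp (φ.or ψ))
  | axOrR (φ ψ : PropForm) : IPC (ψ.imp (φ.or ψ))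
  | axOrE (φ ψ χ : PropForm) : IPC ((φ.imp χ).imp ((ψ.imp χ).imp ((φ.or ψ).imp χ)))
  | axFls (φ : PropForm) : IPC (PropForm.fls.imp φ)
  | axTr : IPC .tr

/-- Unary encoding of a natural number as a binary string. -/
def natBits (n : ℕ) : List Bool := List.replicate n true ++ [false]

/-- An encoding of propositional formulas as binary strings. -/
def PropForm.encode : PropForm → List Bool
  | .tr => [false, false, false]
  | .fls => [false, false, true]
  | .var a => [false, true] ++ natBits a
  | .and φ ψ => [true, false, false] ++ φ.encode ++ ψ.encode
  | .or φ ψ => [true, false, true] ++ φ.encode ++ ψ.encode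
  | .imp φ ψ => [true, true] ++ φ.encode ++ ψ.encode

/-- The language of (codes of) classical propositional tautologies. -/
def CPClang : Set (List Bool) := {w | ∃ φ : PropForm, φ.Taut ∧ w = φ.encode}

/-- The formula computed by a circuit (unfolding the DAG into a tree). -/
def CircuitBase.gateForm (c : CircuitBase) (i : Fin c.size) : PropForm :=
  match h : c.gates i with
  | .const b => if b then .tr else .fls
  | .input a => .var a
  | .not j => (c.gateForm j).neg
  | .and j k => (c.gateForm j).and (c.gateForm k)
  | .or j k => (c.gateForm j).or (c.gateForm k)
termination_by (i : ℕ)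
decreasing_by
  · exact c.wf i j (by rw [h]; simp [CGate.deps])
  · exact c.wf i j (by rw [h]; simp [CGate.deps])
  · exact c.wf i k (by rw [h]; simp [CGate.deps])
  · exact c.wf i j (by rw [h]; simp [CGate.deps])
  · exact c.wf i k (by rw [h]; simp [CGate.deps])

/-- The formula `[C]` of a single-output circuit `C`. -/
def Circuit.toForm (c : Circuit) : PropForm := c.toCircuitBase.gateForm c.out

/-- `[C]` is a Craig interpolant for `φ → ψ`: `C` reads only the shared
variables, and for every assignment `v`, `φ(v) = 1` implies `C(v) = 1`, and
`C(v) = 1` implies `ψ(v) = 1`. -/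
def Interpolates (C : Circuit) (φ ψ : PropForm) : Prop :=
  C.toCircuitBase.InputsIn {a | a ∈ φ.vars ∩ ψ.vars} ∧
  ∀ v : ℕ → Bool, (φ.eval v = true → C.eval v = true) ∧ (C.eval v = true → ψ.eval v = true)

/-- Feasible interpolation of a proof system for `CPC`: from any proof of an
implication one obtains an interpolating circuit of polynomial size. -/
def FeasibleInterpolation (Pr : List Bool → List Bool → Prop) : Prop :=
  ∃ s : Polynomial ℕ, ∀ (φ ψ : PropForm) (u : List Bool),
    Pr u (φ.imp ψ).encode →
    ∃ C : Circuit,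
      C.size ≤ s.eval (u.length + (φ.imp ψ).encode.length) ∧ Interpolates C φ ψ

/-! ## Horn formulas -/

/-- A conjunction of atoms. -/
inductive AtomConj : PropForm → Prop
  | var (a : ℕ) : AtomConj (.var a)
  | and {φ ψ : PropForm} : AtomConj φ → AtomConj ψ → AtomConj (φ.and ψ)

/-- An implicational Horn formula: an atom, or `(p₁ ∧ … ∧ p_k) → r` with all
`pᵢ` and `r` atoms. -/
inductive IsHorn : PropForm → Prop
  | atom (a : ℕ) : IsHorn (.var a)
  | imp {φ : PropForm} (r : ℕ) : AtomConj φ → IsHorn (φ.imp (.var r))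

/-! ## Modal formulas -/

/-- Modal propositional formulas. -/
inductive ModalForm : Type where
  | tr : ModalForm
  | fls : ModalForm
  | var : ℕ → ModalForm
  | and : ModalForm → ModalForm → ModalForm
  | or : ModalForm → ModalForm → ModalForm
  | imp : ModalForm → ModalForm → ModalForm
  | box : ModalForm → ModalForm
deriving DecidableEq

/-- Modal negation. -/
def ModalForm.neg (φ : ModalForm) : ModalForm := φ.imp .fls

/-- Substitution for modal formulas. -/
def ModalForm.subst (σ : ℕ → ModalForm) : ModalForm → ModalForm
  | .tr => .tr
  | .fls => .fls
  | .var a => σ a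
  | .and φ ψ => .and (φ.subst σ) (ψ.subst σ)
  | .or φ ψ => .or (φ.subst σ) (ψ.subst σ)
  | .imp φ ψ => .imp (φ.subst σ) (ψ.subst σ)
  | .box φ => .box (φ.subst σ)

/-- The forgetful translation (`□φ ↦ φ`). -/
def ModalForm.forget : ModalForm → PropForm
  | .tr => .tr
  | .fls => .fls
  | .var a => .var a
  | .and φ ψ => .and φ.forget ψ.forget
  | .or φ ψ => .or φ.forget ψ.forget
  | .imp φ ψ => .imp φ.forget ψ.forget
  | .box φ => φ.forget

/-- The collapse translation (`□φ ↦ ⊤`). -/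
def ModalForm.collapse : ModalForm → PropForm
  | .tr => .tr
  | .fls => .fls
  | .var a => .var a
  | .and φ ψ => .and φ.collapse ψ.collapse
  | .or φ ψ => .or φ.collapse ψ.collapse
  | .imp φ ψ => .imp φ.collapse ψ.collapse
  | .box _ => .tr

/-- Hilbert-style provability in the normal modal logic `K` extended by the
axioms in `Ax` (closed under substitution): a classical propositional base,
the distribution axiom, modus ponens, necessitation and substitution. -/
inductive KExt (Ax : Set ModalForm) : ModalForm → Prop
  | axiom' {φ : ModalForm} : φ ∈ Ax → KExt Ax φ
  | mp {φ ψ : ModalForm} : KExt Ax (φ.imp ψ) → KExt Ax φ → KExt Ax ψ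
  | nec {φ : ModalForm} : KExt Ax φ → KExt Ax φ.box
  | subst {φ : ModalForm} (σ : ℕ → ModalForm) : KExt Ax φ → KExt Ax (φ.subst σ)
  | ax1 (φ ψ : ModalForm) : KExt Ax (φ.imp (ψ.imp φ))
  | ax2 (φ ψ χ : ModalForm) : KExt Ax ((φ.imp (ψ.imp χ)).imp ((φ.imp ψ).imp (φ.imp χ)))
  | axAndI (φ ψ : ModalForm) : KExt Ax (φ.imp (ψ.imp (φ.and ψ)))
  | axAndL (φ ψ : ModalForm) : KExt Ax ((φ.and ψ).imp φ)
  | axAndR (φ ψ : ModalForm) : KExt Ax ((φ.and ψ).imp ψ)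
  | axOrL (φ ψ : ModalForm) : KExt Ax (φ.imp (φ.or ψ))
  | axOrR (φ ψ : ModalForm) : KExt Ax (ψ.imp (φ.or ψ))
  | axOrE (φ ψ χ : ModalForm) : KExt Ax ((φ.imp χ).imp ((ψ.imp χ).imp ((φ.or ψ).imp χ)))
  | axFls (φ : ModalForm) : KExt Ax (ModalForm.fls.imp φ)
  | axTr : KExt Ax .tr
  | axDNE (φ : ModalForm) : KExt Ax (φ.neg.neg.imp φ)
  | axK (φ ψ : ModalForm) : KExt Ax (((φ.imp ψ).box).imp (φ.box.imp ψ.box))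

/-- Provability in the basic modal logic `K`. -/
def KProof : ModalForm → Prop := KExt ∅

/-! ## Automatability -/

/-- A proof system for `CPC` is substitutable: substituting constants for some
of the variables transforms proofs with polynomial overhead. -/
def Substitutable (Pr : List Bool → List Bool → Prop) : Prop :=
  ∃ l : Polynomial ℕ, ∀ (φ : PropForm) (σ : ℕ → PropForm) (u : List Bool),
    (∀ a, σ a = .var a ∨ σ a = .tr ∨ σ a = .fls) →
    Pr u φ.encode →
    ∃ u', Pr u' (φ.subst σ).encode ∧ u'.length ≤ l.eval (u.length + φ.encode.length)

/-- Closure under variable-free modus ponens: from a proof of `φ → ψ` with `φ` a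
variable-free tautology one obtains a proof of `ψ` with polynomial overhead. -/
def ClosedUnderVarFreeMP (Pr : List Bool → List Bool → Prop) : Prop :=
  ∃ m : Polynomial ℕ, ∀ (φ ψ : PropForm) (u : List Bool),
    φ.vars = ∅ → φ.Taut → Pr u (φ.imp ψ).encode →
    ∃ u', Pr u' ψ.encode ∧ u'.length ≤ m.eval (u.length + (φ.imp ψ).encode.length)

/-- Automatability (padded formulation): a polynomial-time algorithm which, given a
formula `φ` together with (in unary) any bound `b` on the size of some `Pr`-proof of
`φ`, outputs a `Pr`-proof of `φ`; its running time is thus polynomial in `|φ|` and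
the size of the shortest proof of `φ`. -/
def Automatable (Pr : List Bool → List Bool → Prop) : Prop :=
  ∃ A : List Bool → List Bool, PolyTimeComputable A ∧
    ∀ (φ : PropForm) (b : ℕ),
      (∃ u, Pr u φ.encode ∧ u.length ≤ b) →
      Pr (A (pairEnc φ.encode (List.replicate b true))) φ.encode

/-! ## Frege systems -/

/-- An inference rule: finitely many premises and a conclusion. -/
structure FregeRule : Type where
  prems : List PropForm
  concl : PropForm

/-- `π` is a derivation from assumptions `Γ` in the inference system `F`: every
line is an assumption or follows from earlier lines by a substitution instance
of a rule of `F`. -/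
def IsDerivation (F : List FregeRule) (Γ : List PropForm) (π : List PropForm) : Prop :=
  ∀ (i : ℕ) (hi : i < π.length),
    π.get ⟨i, hi⟩ ∈ Γ ∨
    ∃ R ∈ F, ∃ σ : ℕ → PropForm,
      π.get ⟨i, hi⟩ = R.concl.subst σ ∧
      ∀ p ∈ R.prems, ∃ (j : ℕ) (hj : j < π.length), j < i ∧ π.get ⟨j, hj⟩ = p.subst σ

/-- `φ` is derivable from `Γ` in the inference system `F`. -/
def FregeProves (F : List FregeRule) (Γ : List PropForm) (φ : PropForm) : Prop :=
  ∃ π : List PropForm, IsDerivation F Γ π ∧ φ ∈ π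

/-- The size of a derivation: the total size of its formulas. -/
def derivSize (π : List PropForm) : ℕ := (π.map PropForm.size).sum

/-! ## Graphs encoded as binary strings -/

/-- Adjacency in the graph on `n` vertices encoded by a binary string of length
`n(n-1)/2` (the entry for the pair `{i, j}` with `i < j` is at position
`j(j-1)/2 + i`). -/
def adjOf (w : List Bool) (i j : ℕ) : Bool :=
  if i < j then w.getD (j * (j - 1) / 2 + i) false
  else if j < i then w.getD (i * (i - 1) / 2 + j) false
  else false

/-- The graph encoded by `w` (on `n` vertices) contains a `k`-clique. -/
def HasClique (w : List Bool) (n k : ℕ) : Prop :=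
  ∃ f : Fin k → Fin n, Function.Injective f ∧
    ∀ a b : Fin k, a ≠ b → adjOf w (f a) (f b) = true

/-- The graph encoded by `w` (on `n` vertices) has a proper `l`-coloring. -/
def HasColoring (w : List Bool) (n l : ℕ) : Prop :=
  ∃ c : Fin n → Fin l, ∀ i j : Fin n, adjOf w (i : ℕ) (j : ℕ) = true → c i ≠ c j

/-- The language of graphs (on `n ≥ n₀` vertices) containing a `K(n)`-clique. -/
def CliqueLang (n₀ : ℕ) (K : ℕ → ℕ) : Set (List Bool) :=
  {w | ∃ n, n₀ ≤ n ∧ w.length = n * (n - 1) / 2 ∧ HasClique w n (K n)}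

/-- The language of graphs (on `n ≥ n₀` vertices) that are `L(n)`-colorable. -/
def ColorLang (n₀ : ℕ) (L : ℕ → ℕ) : Set (List Bool) :=
  {w | ∃ n, n₀ ≤ n ∧ w.length = n * (n - 1) / 2 ∧ HasColoring w n (L n)}

/-! ## Substitutions used for the intuitionistic translations -/

/-- The substitution replacing `pᵢ` (`i < m`) by `¬pᵢ`. -/
def negSubst (m : ℕ) : ℕ → PropForm :=
  fun a => if a < m then (PropForm.var a).neg else PropForm.var a

/-- The substitution replacing `pᵢ` (`i < m`) by the fresh variable `q_i := p_{m+i}`. -/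
def shiftSubst (m : ℕ) : ℕ → PropForm :=
  fun a => if a < m then PropForm.var (m + a) else PropForm.var a

/-- `⋀_{i<m} (pᵢ ∨ qᵢ)` where `qᵢ := p_{m+i}`. -/
def pairDisjConj (m : ℕ) : PropForm :=
  conjList ((List.range m).map fun i => (PropForm.var i).or (PropForm.var (m + i)))

/-! ## Auxiliary development: a cut-free sequent calculus for IPC -/

namespace DisjInterp

/-- Natural deduction from a multiset of hypotheses, over the Hilbert system `IPC`. -/
inductive IPCf (Γ : Multiset PropForm) : PropForm → Prop
  | hyp {φ : PropForm} : φ ∈ Γ → IPCf Γ φ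
  | thm {φ : PropForm} : IPC φ → IPCf Γ φ
  | mp {φ ψ : PropForm} : IPCf Γ (φ.imp ψ) → IPCf Γ φ → IPCf Γ ψ

theorem IPC.imp_refl (φ : PropForm) : IPC (φ.imp φ) :=
  .mp (.mp (.ax2 φ (φ.imp φ) φ) (.ax1 φ (φ.imp φ))) (.ax1 φ φ)

theorem IPC.comp {a b c : PropForm} (h1 : IPC (a.imp b)) (h2 : IPC (b.imp c)) :
    IPC (a.imp c) :=
  .mp (.mp (.ax2 a b c) (.mp (.ax1 (b.imp c) a) h2)) h1

namespace IPCf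

theorem wk {Γ Γ' : Multiset PropForm} {φ : PropForm} (d : IPCf Γ φ)
    (hs : ∀ x ∈ Γ, x ∈ Γ') : IPCf Γ' φ := by
  induction d with
  | hyp h => exact .hyp (hs _ h)
  | thm h => exact .thm h
  | mp _ _ ih1 ih2 => exact .mp ih1 ih2

theorem ded {Γ : Multiset PropForm} {φ ψ : PropForm} (d : IPCf (φ ::ₘ Γ) ψ) :
    IPCf Γ (φ.imp ψ) := by
  generalize hΔ : φ ::ₘ Γ = Δ at d
  induction d with
  | hyp h =>
    subst hΔ
    rcases Multiset.mem_cons.mp h with rfl | h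
    · exact .thm (IPC.imp_refl _)
    · exact .mp (.thm (.ax1 _ _)) (.hyp h)
  | thm h => exact .mp (.thm (.ax1 _ _)) (.thm h)
  | mp _ _ ih1 ih2 => exact .mp (.mp (.thm (.ax2 _ _ _)) ih1) ih2

theorem toIPC {φ : PropForm} (d : IPCf 0 φ) : IPC φ := by
  generalize hΔ : (0 : Multiset PropForm) = Δ at d
  induction d with
  | hyp h => subst hΔ; simp at h
  | thm h => exact h
  | mp _ _ ih1 ih2 => exact .mp ih1 ih2

theorem andE1 {Γ} {φ ψ : PropForm} (d : IPCf Γ (φ.and ψ)) : IPCf Γ φ :=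
  .mp (.thm (.axAndL φ ψ)) d

theorem andE2 {Γ} {φ ψ : PropForm} (d : IPCf Γ (φ.and ψ)) : IPCf Γ ψ :=
  .mp (.thm (.axAndR φ ψ)) d

theorem andI {Γ} {φ ψ : PropForm} (d1 : IPCf Γ φ) (d2 : IPCf Γ ψ) : IPCf Γ (φ.and ψ) :=
  .mp (.mp (.thm (.axAndI φ ψ)) d1) d2

theorem orE {Γ} {φ ψ δ : PropForm} (d : IPCf Γ (φ.or ψ))
    (d1 : IPCf Γ (φ.imp δ)) (d2 : IPCf Γ (ψ.imp δ)) : IPCf Γ δ :=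
  .mp (.mp (.mp (.thm (.axOrE φ ψ δ)) d1) d2) d

theorem cut1 {Γ} {α δ : PropForm} (d : IPCf Γ α) (d2 : IPCf (α ::ₘ Γ) δ) : IPCf Γ δ :=
  .mp (ded d2) d

theorem cut2 {Γ} {α β δ : PropForm} (da : IPCf Γ α) (db : IPCf Γ β)
    (d2 : IPCf (α ::ₘ β ::ₘ Γ) δ) : IPCf Γ δ :=
  cut1 db (cut1 (da.wk fun x hx => Multiset.mem_cons_of_mem hx)
    (d2.wk (by intro x hx; simp only [Multiset.mem_cons] at hx ⊢; tauto)))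

end IPCf

/-- A G3ip-style cut-free sequent calculus for `IPC`, with height index.
Left rules keep their principal formula (stated via membership), which makes
weakening, exchange and contraction admissible in one stroke. -/
inductive SeqN : ℕ → Multiset PropForm → PropForm → Prop
  | ax {n : ℕ} {Γ : Multiset PropForm} {a : ℕ} : PropForm.var a ∈ Γ → SeqN n Γ (.var a)
  | botL {n : ℕ} {Γ : Multiset PropForm} {δ : PropForm} : PropForm.fls ∈ Γ → SeqN n Γ δ
  | topR {n : ℕ} {Γ : Multiset PropForm} : SeqN n Γ .tr
  | andL {n : ℕ} {Γ : Multiset PropForm} {δ φ χ : PropForm} :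
      φ.and χ ∈ Γ → SeqN n (φ ::ₘ χ ::ₘ Γ) δ → SeqN (n+1) Γ δ
  | andR {n : ℕ} {Γ : Multiset PropForm} {φ χ : PropForm} :
      SeqN n Γ φ → SeqN n Γ χ → SeqN (n+1) Γ (φ.and χ)
  | orL {n : ℕ} {Γ : Multiset PropForm} {δ φ χ : PropForm} :
      φ.or χ ∈ Γ → SeqN n (φ ::ₘ Γ) δ → SeqN n (χ ::ₘ Γ) δ → SeqN (n+1) Γ δ
  | orR1 {n : ℕ} {Γ : Multiset PropForm} {φ χ : PropForm} :
      SeqN n Γ φ → SeqN (n+1) Γ (φ.or χ)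
  | orR2 {n : ℕ} {Γ : Multiset PropForm} {φ χ : PropForm} :
      SeqN n Γ χ → SeqN (n+1) Γ (φ.or χ)
  | impL {n : ℕ} {Γ : Multiset PropForm} {δ φ χ : PropForm} :
      φ.imp χ ∈ Γ → SeqN n Γ φ → SeqN n (χ ::ₘ Γ) δ → SeqN (n+1) Γ δ
  | impR {n : ℕ} {Γ : Multiset PropForm} {φ χ : PropForm} :
      SeqN n (φ ::ₘ Γ) χ → SeqN (n+1) Γ (φ.imp χ)

/-- Derivability in the cut-free calculus. -/
def Seq (Γ : Multiset PropForm) (δ : PropForm) : Prop := ∃ n, SeqN n Γ δ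

theorem SeqN.mono : ∀ {n Γ δ}, SeqN n Γ δ → ∀ {m}, n ≤ m → SeqN m Γ δ := by
  intro n Γ δ d
  induction d with
  | ax h => exact fun _ => .ax h
  | botL h => exact fun _ => .botL h
  | topR => exact fun _ => .topR
  | andL h p ih =>
    intro m hm
    obtain ⟨k, rfl⟩ : ∃ k, m = k + 1 := ⟨m - 1, by omega⟩
    exact .andL h (ih (by omega))
  | andR p q ih1 ih2 =>
    intro m hm
    obtain ⟨k, rfl⟩ : ∃ k, m = k + 1 := ⟨m - 1, by omega⟩
    exact .andR (ih1 (by omega)) (ih2 (by omega))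
  | orL h p q ih1 ih2 =>
    intro m hm
    obtain ⟨k, rfl⟩ : ∃ k, m = k + 1 := ⟨m - 1, by omega⟩
    exact .orL h (ih1 (by omega)) (ih2 (by omega))
  | orR1 p ih =>
    intro m hm
    obtain ⟨k, rfl⟩ : ∃ k, m = k + 1 := ⟨m - 1, by omega⟩
    exact .orR1 (ih (by omega))
  | orR2 p ih =>
    intro m hm
    obtain ⟨k, rfl⟩ : ∃ k, m = k + 1 := ⟨m - 1, by omega⟩
    exact .orR2 (ih (by omega))
  | impL h p q ih1 ih2 =>
    intro m hm
    obtain ⟨k, rfl⟩ : ∃ k, m = k + 1 := ⟨m - 1, by omega⟩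
    exact .impL h (ih1 (by omega)) (ih2 (by omega))
  | impR p ih =>
    intro m hm
    obtain ⟨k, rfl⟩ : ∃ k, m = k + 1 := ⟨m - 1, by omega⟩
    exact .impR (ih (by omega))

/-- Weakening, exchange and contraction, all at once, height-preserving. -/
theorem SeqN.setCtx : ∀ {n Γ δ}, SeqN n Γ δ → ∀ {Γ'}, (∀ x ∈ Γ, x ∈ Γ') → SeqN n Γ' δ := by
  intro n Γ δ d
  induction d with
  | ax h => exact fun hs => .ax (hs _ h)
  | botL h => exact fun hs => .botL (hs _ h)
  | topR => exact fun _ => .topR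
  | andL h p ih =>
    intro Γ' hs
    exact .andL (hs _ h) (ih (by intro x hx; simp only [Multiset.mem_cons] at hx ⊢; tauto))
  | andR p q ih1 ih2 => exact fun hs => .andR (ih1 hs) (ih2 hs)
  | orL h p q ih1 ih2 =>
    intro Γ' hs
    exact .orL (hs _ h)
      (ih1 (by intro x hx; simp only [Multiset.mem_cons] at hx ⊢; tauto))
      (ih2 (by intro x hx; simp only [Multiset.mem_cons] at hx ⊢; tauto))
  | orR1 p ih => exact fun hs => .orR1 (ih hs)
  | orR2 p ih => exact fun hs => .orR2 (ih hs)
  | impL h p q ih1 ih2 =>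
    intro Γ' hs
    exact .impL (hs _ h) (ih1 hs)
      (ih2 (by intro x hx; simp only [Multiset.mem_cons] at hx ⊢; tauto))
  | impR p ih =>
    intro Γ' hs
    exact .impR (ih (by intro x hx; simp only [Multiset.mem_cons] at hx ⊢; tauto))

namespace Seq

theorem ax {Γ} {a : ℕ} (h : PropForm.var a ∈ Γ) : Seq Γ (.var a) := ⟨0, .ax h⟩
theorem botL {Γ} {δ} (h : PropForm.fls ∈ Γ) : Seq Γ δ := ⟨0, .botL h⟩
theorem topR {Γ} : Seq Γ .tr := ⟨0, .topR⟩
theorem andL {Γ δ} {φ χ : PropForm} (h : φ.and χ ∈ Γ) (d : Seq (φ ::ₘ χ ::ₘ Γ) δ) :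
    Seq Γ δ := let ⟨n, p⟩ := d; ⟨n+1, .andL h p⟩
theorem andR {Γ} {φ χ : PropForm} (d1 : Seq Γ φ) (d2 : Seq Γ χ) : Seq Γ (φ.and χ) :=
  let ⟨n, p⟩ := d1; let ⟨m, q⟩ := d2
  ⟨max n m + 1, .andR (p.mono (le_max_left n m)) (q.mono (le_max_right n m))⟩
theorem orL {Γ δ} {φ χ : PropForm} (h : φ.or χ ∈ Γ) (d1 : Seq (φ ::ₘ Γ) δ)
    (d2 : Seq (χ ::ₘ Γ) δ) : Seq Γ δ :=
  let ⟨n, p⟩ := d1; let ⟨m, q⟩ := d2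
  ⟨max n m + 1, .orL h (p.mono (le_max_left n m)) (q.mono (le_max_right n m))⟩
theorem orR1 {Γ} {φ χ : PropForm} (d : Seq Γ φ) : Seq Γ (φ.or χ) :=
  let ⟨n, p⟩ := d; ⟨n+1, .orR1 p⟩
theorem orR2 {Γ} {φ χ : PropForm} (d : Seq Γ χ) : Seq Γ (φ.or χ) :=
  let ⟨n, p⟩ := d; ⟨n+1, .orR2 p⟩
theorem impL {Γ δ} {φ χ : PropForm} (h : φ.imp χ ∈ Γ) (d1 : Seq Γ φ)
    (d2 : Seq (χ ::ₘ Γ) δ) : Seq Γ δ :=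
  let ⟨n, p⟩ := d1; let ⟨m, q⟩ := d2
  ⟨max n m + 1, .impL h (p.mono (le_max_left n m)) (q.mono (le_max_right n m))⟩
theorem impR {Γ} {φ χ : PropForm} (d : Seq (φ ::ₘ Γ) χ) : Seq Γ (φ.imp χ) :=
  let ⟨n, p⟩ := d; ⟨n+1, .impR p⟩
theorem setCtx {Γ Γ' δ} (d : Seq Γ δ) (hs : ∀ x ∈ Γ, x ∈ Γ') : Seq Γ' δ :=
  let ⟨n, p⟩ := d; ⟨n, p.setCtx hs⟩

/-- The identity sequents, for arbitrary formulas. -/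
theorem id : ∀ (φ : PropForm) {Γ}, φ ∈ Γ → Seq Γ φ := by
  intro φ
  induction φ with
  | tr => exact fun _ => topR
  | fls => exact fun h => botL h
  | var a => exact fun h => ax h
  | and φ χ ih1 ih2 =>
    intro Γ h
    exact andR (andL h (ih1 (Multiset.mem_cons_self _ _)))
      (andL h (ih2 (Multiset.mem_cons_of_mem (Multiset.mem_cons_self _ _))))
  | or φ χ ih1 ih2 =>
    intro Γ h
    exact orL h (orR1 (ih1 (Multiset.mem_cons_self _ _)))
      (orR2 (ih2 (Multiset.mem_cons_self _ _)))
  | imp φ χ ih1 ih2 =>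
    intro Γ h
    refine impR (impL (Multiset.mem_cons_of_mem h) (ih1 (Multiset.mem_cons_self _ _)) ?_)
    exact ih2 (Multiset.mem_cons_self _ _)

end Seq

/-- Height-preserving inversion of the right `∧` rule. -/
theorem SeqN.andRinv : ∀ {n Γ δ}, SeqN n Γ δ → ∀ {φ χ : PropForm}, δ = φ.and χ →
    SeqN n Γ φ ∧ SeqN n Γ χ := by
  intro n Γ δ d
  induction d with
  | ax h => intro φ χ heq; simp at heq
  | botL h => exact fun _ => ⟨.botL h, .botL h⟩
  | topR => intro φ χ heq; simp at heq
  | andL h p ih =>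
    intro φ χ heq
    obtain ⟨p1, p2⟩ := ih heq
    exact ⟨.andL h p1, .andL h p2⟩
  | andR p q _ _ =>
    intro φ χ heq
    injection heq with h1 h2
    subst h1; subst h2
    exact ⟨p.mono (by omega), q.mono (by omega)⟩
  | orL h p q ih1 ih2 =>
    intro φ χ heq
    obtain ⟨p1, p2⟩ := ih1 heq
    obtain ⟨q1, q2⟩ := ih2 heq
    exact ⟨.orL h p1 q1, .orL h p2 q2⟩
  | orR1 p ih => intro φ χ heq; simp at heq
  | orR2 p ih => intro φ χ heq; simp at heq
  | impL h p q _ ih2 =>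
    intro φ χ heq
    obtain ⟨q1, q2⟩ := ih2 heq
    exact ⟨.impL h p q1, .impL h p q2⟩
  | impR p ih => intro φ χ heq; simp at heq

/-- Height-preserving inversion of the right `→` rule. -/
theorem SeqN.impRinv : ∀ {n Γ δ}, SeqN n Γ δ → ∀ {φ χ : PropForm}, δ = φ.imp χ →
    SeqN n (φ ::ₘ Γ) χ := by
  intro n Γ δ d
  induction d with
  | ax h => intro φ χ heq; simp at heq
  | botL h => exact fun _ => .botL (Multiset.mem_cons_of_mem h)
  | topR => intro φ χ heq; simp at heq
  | andL h p ih =>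
    intro φ χ heq
    refine .andL (Multiset.mem_cons_of_mem h) ((ih heq).setCtx ?_)
    intro x hx; simp only [Multiset.mem_cons] at hx ⊢; tauto
  | andR p q _ _ => intro φ χ heq; simp at heq
  | orL h p q ih1 ih2 =>
    intro φ χ heq
    refine .orL (Multiset.mem_cons_of_mem h) ((ih1 heq).setCtx ?_) ((ih2 heq).setCtx ?_) <;>
      (intro x hx; simp only [Multiset.mem_cons] at hx ⊢; tauto)
  | orR1 p ih => intro φ χ heq; simp at heq
  | orR2 p ih => intro φ χ heq; simp at heq
  | impL h p q _ ih2 =>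
    intro φ χ heq
    refine .impL (Multiset.mem_cons_of_mem h)
      (p.setCtx fun x hx => Multiset.mem_cons_of_mem hx) ((ih2 heq).setCtx ?_)
    intro x hx; simp only [Multiset.mem_cons] at hx ⊢; tauto
  | impR p _ =>
    intro φ χ heq
    injection heq with h1 h2
    subst h1; subst h2
    exact p.mono (by omega)

/-- If `⊥` is derivable then anything is, height-preserving. -/
theorem SeqN.falseE : ∀ {n Γ δ}, SeqN n Γ δ → δ = .fls → ∀ (δ' : PropForm), SeqN n Γ δ' := by
  intro n Γ δ d
  induction d with
  | ax h => intro heq; simp at heq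
  | botL h => exact fun _ δ' => .botL h
  | topR => intro heq; simp at heq
  | andL h p ih => exact fun heq δ' => .andL h (ih heq δ')
  | andR p q _ _ => intro heq; simp at heq
  | orL h p q ih1 ih2 => exact fun heq δ' => .orL h (ih1 heq δ') (ih2 heq δ')
  | orR1 p ih => intro heq; simp at heq
  | orR2 p ih => intro heq; simp at heq
  | impL h p q _ ih2 => exact fun heq δ' => .impL h p (ih2 heq δ')
  | impR p ih => intro heq; simp at heq

end DisjInterp

namespace DisjInterp

set_option maxHeartbeats 3000000 in
/-- Admissibility of cut (auxiliary version with explicit fuel). -/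
theorem cutAux : ∀ (s : ℕ) (α : PropForm), α.size ≤ s →
    ∀ (h : ℕ), ∀ {n m : ℕ} {Γ Δ : Multiset PropForm} {δ : PropForm}, n + m ≤ h →
    SeqN n Γ α → SeqN m (α ::ₘ Δ) δ → Seq (Γ + Δ) δ := by
  intro s
  induction s with
  | zero =>
    intro α hα
    exact absurd hα (by cases α <;> simp [PropForm.size])
  | succ s ihs =>
    intro α hα h
    induction h using Nat.strong_induction_on with
    | _ h ihh =>
    intro n m Γ Δ δ hnm d1 d2
    cases d2 with
    | ax hmem =>
      rcases Multiset.mem_cons.mp hmem with heq | hm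
      · subst heq
        exact ⟨n, d1.setCtx fun x hx => Multiset.mem_add.mpr (Or.inl hx)⟩
      · exact Seq.ax (Multiset.mem_add.mpr (Or.inr hm))
    | botL hmem =>
      rcases Multiset.mem_cons.mp hmem with heq | hm
      · subst heq
        exact ⟨n, (d1.falseE rfl _).setCtx fun x hx => Multiset.mem_add.mpr (Or.inl hx)⟩
      · exact Seq.botL (Multiset.mem_add.mpr (Or.inr hm))
    | topR => exact Seq.topR
    | @andR m' _ φ χ p q =>
      exact Seq.andR (ihh (n + m') (by omega) (le_refl _) d1 p)
        (ihh (n + m') (by omega) (le_refl _) d1 q)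
    | @orR1 m' _ φ χ p => exact Seq.orR1 (ihh (n + m') (by omega) (le_refl _) d1 p)
    | @orR2 m' _ φ χ p => exact Seq.orR2 (ihh (n + m') (by omega) (le_refl _) d1 p)
    | @impR m' _ φ χ p =>
      have p' : SeqN m' (α ::ₘ (φ ::ₘ Δ)) χ :=
        p.setCtx (by intro x hx; simp only [Multiset.mem_cons] at hx ⊢; tauto)
      refine Seq.impR ((ihh (n + m') (by omega) (le_refl _) d1 p').setCtx ?_)
      intro x hx; simp only [Multiset.mem_cons, Multiset.mem_add] at hx ⊢; tauto
    | @andL m' _ _ φ χ hmem p =>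
      have p' : SeqN m' (α ::ₘ (φ ::ₘ χ ::ₘ Δ)) δ :=
        p.setCtx (by intro x hx; simp only [Multiset.mem_cons] at hx ⊢; tauto)
      have r : Seq (Γ + (φ ::ₘ χ ::ₘ Δ)) δ := ihh (n + m') (by omega) (le_refl _) d1 p'
      rcases Multiset.mem_cons.mp hmem with heq | hm
      · -- principal case: `α = φ ∧ χ`
        subst heq
        simp only [PropForm.size] at hα
        obtain ⟨a1, a2⟩ := d1.andRinv rfl
        obtain ⟨k, rN⟩ := r
        have r' : SeqN k (φ ::ₘ (χ ::ₘ (Γ + Δ))) δ :=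
          rN.setCtx
            (by intro x hx; simp only [Multiset.mem_cons, Multiset.mem_add] at hx ⊢; tauto)
        obtain ⟨k2, r2⟩ := ihs φ (by omega) (n + k) (le_refl _) a1 r'
        have r2' : SeqN k2 (χ ::ₘ (Γ + (Γ + Δ))) δ :=
          r2.setCtx
            (by intro x hx; simp only [Multiset.mem_cons, Multiset.mem_add] at hx ⊢; tauto)
        obtain ⟨k3, r3⟩ := ihs χ (by omega) (n + k2) (le_refl _) a2 r2'
        refine ⟨k3, r3.setCtx ?_⟩
        intro x hx; simp only [Multiset.mem_add] at hx ⊢; tauto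
      · refine Seq.andL (Multiset.mem_add.mpr (Or.inr hm)) (r.setCtx ?_)
        intro x hx; simp only [Multiset.mem_cons, Multiset.mem_add] at hx ⊢; tauto
    | @impL m' _ _ φ χ hmem p q =>
      have r1 : Seq (Γ + Δ) φ := ihh (n + m') (by omega) (le_refl _) d1 p
      have q' : SeqN m' (α ::ₘ (χ ::ₘ Δ)) δ :=
        q.setCtx (by intro x hx; simp only [Multiset.mem_cons] at hx ⊢; tauto)
      have r2 : Seq (Γ + (χ ::ₘ Δ)) δ := ihh (n + m') (by omega) (le_refl _) d1 q'
      rcases Multiset.mem_cons.mp hmem with heq | hm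
      · -- principal case: `α = φ → χ`
        subst heq
        simp only [PropForm.size] at hα
        have i1 : SeqN n (φ ::ₘ Γ) χ := d1.impRinv rfl
        obtain ⟨k1, r1N⟩ := r1
        obtain ⟨k3, r3N⟩ := ihs φ (by omega) (k1 + n) (le_refl _) r1N i1
        obtain ⟨k2, r2N⟩ := r2
        have r2' : SeqN k2 (χ ::ₘ ((Γ + Δ) + Γ)) δ := by
          refine r2N.setCtx ?_
          intro x hx; simp only [Multiset.mem_cons, Multiset.mem_add] at hx ⊢; tauto
        obtain ⟨k4, r4⟩ := ihs χ (by omega) (k3 + k2) (le_refl _) r3N r2'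
        refine ⟨k4, r4.setCtx ?_⟩
        intro x hx; simp only [Multiset.mem_add] at hx ⊢; tauto
      · refine Seq.impL (Multiset.mem_add.mpr (Or.inr hm)) r1 (r2.setCtx ?_)
        intro x hx; simp only [Multiset.mem_cons, Multiset.mem_add] at hx ⊢; tauto
    | @orL m' _ _ φ χ hmem p q =>
      have p' : SeqN m' (α ::ₘ (φ ::ₘ Δ)) δ :=
        p.setCtx (by intro x hx; simp only [Multiset.mem_cons] at hx ⊢; tauto)
      have q' : SeqN m' (α ::ₘ (χ ::ₘ Δ)) δ :=
        q.setCtx (by intro x hx; simp only [Multiset.mem_cons] at hx ⊢; tauto)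
      have r1 : Seq (Γ + (φ ::ₘ Δ)) δ := ihh (n + m') (by omega) (le_refl _) d1 p'
      have r2 : Seq (Γ + (χ ::ₘ Δ)) δ := ihh (n + m') (by omega) (le_refl _) d1 q'
      rcases Multiset.mem_cons.mp hmem with heq | hm
      · -- principal case: `α = φ ∨ χ`; analyse the left derivation
        subst heq
        simp only [PropForm.size] at hα
        cases d1 with
        | botL h1 => exact Seq.botL (Multiset.mem_add.mpr (Or.inl h1))
        | @orR1 n' _ _ _ p1 =>
          obtain ⟨k, r1N⟩ := r1
          have r1' : SeqN k (φ ::ₘ (Γ + Δ)) δ :=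
            r1N.setCtx
              (by intro x hx; simp only [Multiset.mem_cons, Multiset.mem_add] at hx ⊢; tauto)
          obtain ⟨k2, r2N⟩ := ihs φ (by omega) (n' + k) (le_refl _) p1 r1'
          refine ⟨k2, r2N.setCtx ?_⟩
          intro x hx; simp only [Multiset.mem_add] at hx ⊢; tauto
        | @orR2 n' _ _ _ p1 =>
          obtain ⟨k, r2N0⟩ := r2
          have r2'' : SeqN k (χ ::ₘ (Γ + Δ)) δ :=
            r2N0.setCtx
              (by intro x hx; simp only [Multiset.mem_cons, Multiset.mem_add] at hx ⊢; tauto)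
          obtain ⟨k2, r2N⟩ := ihs χ (by omega) (n' + k) (le_refl _) p1 r2''
          refine ⟨k2, r2N.setCtx ?_⟩
          intro x hx; simp only [Multiset.mem_add] at hx ⊢; tauto
        | @andL n' _ _ φ' χ' h1 p1 =>
          have r : Seq ((φ' ::ₘ χ' ::ₘ Γ) + Δ) δ :=
            ihh (n' + (m' + 1)) (by omega) (le_refl _) p1 (SeqN.orL hmem p q)
          refine Seq.andL (Multiset.mem_add.mpr (Or.inl h1)) (r.setCtx ?_)
          intro x hx; simp only [Multiset.mem_cons, Multiset.mem_add] at hx ⊢; tauto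
        | @orL n' _ _ φ' χ' h1 p1 q1 =>
          have ra : Seq ((φ' ::ₘ Γ) + Δ) δ :=
            ihh (n' + (m' + 1)) (by omega) (le_refl _) p1 (SeqN.orL hmem p q)
          have rb : Seq ((χ' ::ₘ Γ) + Δ) δ :=
            ihh (n' + (m' + 1)) (by omega) (le_refl _) q1 (SeqN.orL hmem p q)
          refine Seq.orL (Multiset.mem_add.mpr (Or.inl h1)) (ra.setCtx ?_) (rb.setCtx ?_) <;>
            (intro x hx; simp only [Multiset.mem_cons, Multiset.mem_add] at hx ⊢; tauto)
        | @impL n' _ _ φ' χ' h1 p1 q1 =>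
          have rb : Seq ((χ' ::ₘ Γ) + Δ) δ :=
            ihh (n' + (m' + 1)) (by omega) (le_refl _) q1 (SeqN.orL hmem p q)
          refine Seq.impL (Multiset.mem_add.mpr (Or.inl h1))
            ⟨n', p1.setCtx fun x hx => Multiset.mem_add.mpr (Or.inl hx)⟩ (rb.setCtx ?_)
          intro x hx; simp only [Multiset.mem_cons, Multiset.mem_add] at hx ⊢; tauto
      · refine Seq.orL (Multiset.mem_add.mpr (Or.inr hm)) (r1.setCtx ?_) (r2.setCtx ?_) <;>
          (intro x hx; simp only [Multiset.mem_cons, Multiset.mem_add] at hx ⊢; tauto)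

/-- Admissibility of cut. -/
theorem cutSeq {Γ Δ : Multiset PropForm} {α δ : PropForm}
    (d1 : Seq Γ α) (d2 : Seq (α ::ₘ Δ) δ) : Seq (Γ + Δ) δ := by
  obtain ⟨n, p⟩ := d1; obtain ⟨m, q⟩ := d2
  exact cutAux α.size α (le_refl _) (n + m) (le_refl _) p q

end DisjInterp

namespace DisjInterp

/-- Soundness of the sequent calculus with respect to Hilbert-style `IPC`. -/
theorem seqSound : ∀ {n Γ δ}, SeqN n Γ δ → IPCf Γ δ := by
  intro n Γ δ d
  induction d with
  | ax h => exact .hyp h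
  | botL h => exact .mp (.thm (.axFls _)) (.hyp h)
  | topR => exact .thm .axTr
  | andL h p ih =>
    exact IPCf.cut2 ((IPCf.hyp h).andE1) ((IPCf.hyp h).andE2) ih
  | andR p q ih1 ih2 => exact ih1.andI ih2
  | orL h p q ih1 ih2 => exact (IPCf.hyp h).orE ih1.ded ih2.ded
  | orR1 p ih => exact .mp (.thm (.axOrL _ _)) ih
  | orR2 p ih => exact .mp (.thm (.axOrR _ _)) ih
  | impL h p q ih1 ih2 => exact IPCf.cut1 (.mp (.hyp h) ih1) ih2
  | impR p ih => exact ih.ded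

/-- Completeness: every `IPC`-theorem has a cut-free sequent proof. -/
theorem thmSeq : ∀ {φ : PropForm}, IPC φ → Seq 0 φ := by
  intro φ h
  induction h with
  | @mp φ ψ h1 h2 ih1 ih2 =>
    have d : Seq ((φ.imp ψ) ::ₘ 0) ψ :=
      Seq.impL (Multiset.mem_cons_self _ _)
        (ih2.setCtx fun x hx => by simp at hx)
        (Seq.id ψ (Multiset.mem_cons_self _ _))
    have := cutSeq ih1 d
    simpa using this
  | ax1 φ ψ =>
    exact Seq.impR (Seq.impR (Seq.id φ (Multiset.mem_cons_of_mem (Multiset.mem_cons_self _ _))))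
  | ax2 φ ψ χ =>
    refine Seq.impR (Seq.impR (Seq.impR ?_))
    refine Seq.impL (φ := φ) (χ := ψ) (by simp) (Seq.id φ (by simp)) ?_
    refine Seq.impL (φ := φ) (χ := ψ.imp χ) (by simp) (Seq.id φ (by simp)) ?_
    refine Seq.impL (φ := ψ) (χ := χ) (by simp) (Seq.id ψ (by simp)) ?_
    exact Seq.id χ (by simp)
  | axAndI φ ψ =>
    refine Seq.impR (Seq.impR (Seq.andR ?_ ?_))
    · exact Seq.id φ (Multiset.mem_cons_of_mem (Multiset.mem_cons_self _ _))
    · exact Seq.id ψ (Multiset.mem_cons_self _ _)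
  | axAndL φ ψ =>
    refine Seq.impR (Seq.andL (Multiset.mem_cons_self _ _) ?_)
    exact Seq.id φ (Multiset.mem_cons_self _ _)
  | axAndR φ ψ =>
    refine Seq.impR (Seq.andL (Multiset.mem_cons_self _ _) ?_)
    exact Seq.id ψ (Multiset.mem_cons_of_mem (Multiset.mem_cons_self _ _))
  | axOrL φ ψ =>
    exact Seq.impR (Seq.orR1 (Seq.id φ (Multiset.mem_cons_self _ _)))
  | axOrR φ ψ =>
    exact Seq.impR (Seq.orR2 (Seq.id ψ (Multiset.mem_cons_self _ _)))
  | axOrE φ ψ χ =>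
    refine Seq.impR (Seq.impR (Seq.impR ?_))
    refine Seq.orL (Multiset.mem_cons_self _ _) ?_ ?_
    · refine Seq.impL (φ := φ) (χ := χ) (by simp [Multiset.mem_cons]) ?_ ?_
      · exact Seq.id φ (Multiset.mem_cons_self _ _)
      · exact Seq.id χ (Multiset.mem_cons_self _ _)
    · refine Seq.impL (φ := ψ) (χ := χ) (by simp [Multiset.mem_cons]) ?_ ?_
      · exact Seq.id ψ (Multiset.mem_cons_self _ _)
      · exact Seq.id χ (Multiset.mem_cons_self _ _)
  | axFls φ => exact Seq.impR (Seq.botL (Multiset.mem_cons_self _ _))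
  | axTr => exact Seq.topR

end DisjInterp

namespace DisjInterp

/-- The variables of a context. -/
def ctxVars (Γ : Multiset PropForm) : Finset ℕ := (Γ.map PropForm.vars).sup

theorem ctxVars_cons (γ : PropForm) (Γ : Multiset PropForm) :
    ctxVars (γ ::ₘ Γ) = γ.vars ∪ ctxVars Γ := by
  simp [ctxVars, Multiset.sup_cons, Finset.sup_eq_union]

theorem vars_subset_ctxVars {γ : PropForm} {Γ : Multiset PropForm} (h : γ ∈ Γ) :
    γ.vars ⊆ ctxVars Γ := by
  have : γ.vars ≤ ctxVars Γ := Multiset.le_sup (Multiset.mem_map_of_mem _ h)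
  exact fun x hx => this hx

theorem ctxVars_cons_sub {γ' : PropForm} {Γ : Multiset PropForm}
    (hv : γ'.vars ⊆ ctxVars Γ) : ctxVars (γ' ::ₘ Γ) ⊆ ctxVars Γ := by
  rw [ctxVars_cons]
  intro x hx
  rcases Finset.mem_union.mp hx with hx | hx
  exacts [hv hx, hx]

theorem ctxVars_sub_cons (γ' : PropForm) (Γ : Multiset PropForm) :
    ctxVars Γ ⊆ ctxVars (γ' ::ₘ Γ) := by
  rw [ctxVars_cons]; exact Finset.subset_union_right

/-- The conjunction of a context. -/
noncomputable def ctxConj (Γ : Multiset PropForm) : PropForm := conjList Γ.toList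

theorem conjList_vars : ∀ L : List PropForm, (conjList L).vars = ctxVars ↑L := by
  intro L
  induction L with
  | nil => simp [conjList, ctxVars, PropForm.vars]
  | cons a L ih =>
    show (a.and (conjList L)).vars = _
    rw [show ((↑(a :: L) : Multiset PropForm)) = a ::ₘ ↑L from rfl, ctxVars_cons]
    simp [PropForm.vars, ih]

theorem ctxConj_vars (Γ : Multiset PropForm) : (ctxConj Γ).vars = ctxVars Γ := by
  rw [ctxConj, conjList_vars, Multiset.coe_toList]

theorem conjList_mono : ∀ L : List PropForm, (∀ γ ∈ L, γ.IsMonotone) →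
    (conjList L).IsMonotone := by
  intro L
  induction L with
  | nil => exact fun _ => trivial
  | cons a L ih =>
    intro h
    exact ⟨h a (by simp), ih fun γ hγ => h γ (by simp [hγ])⟩

theorem ctxConj_mono {Γ : Multiset PropForm} (h : ∀ γ ∈ Γ, γ.IsMonotone) :
    (ctxConj Γ).IsMonotone :=
  conjList_mono _ fun γ hγ => h γ (by rwa [← Multiset.mem_toList])

theorem conjList_intro {Γ : Multiset PropForm} : ∀ L : List PropForm,
    (∀ γ ∈ L, IPCf Γ γ) → IPCf Γ (conjList L) := by
  intro L
  induction L with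
  | nil => exact fun _ => .thm .axTr
  | cons a L ih =>
    intro h
    exact IPCf.andI (h a (by simp)) (ih fun γ hγ => h γ (by simp [hγ]))

theorem ctxConj_self (Γ : Multiset PropForm) : IPCf Γ (ctxConj Γ) :=
  conjList_intro _ fun γ hγ => .hyp (by rwa [Multiset.mem_toList] at hγ)

theorem conj_ded : ∀ (L : List PropForm) {δ : PropForm},
    IPCf ↑L δ → IPC ((conjList L).imp δ) := by
  intro L
  induction L with
  | nil =>
    intro δ h
    have h0 : IPCf 0 δ := by simpa using h
    exact .mp (.ax1 δ .tr) h0.toIPC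
  | cons a L ih =>
    intro δ h
    have h' : IPCf (a ::ₘ (↑L : Multiset PropForm)) δ := by simpa using h
    have h2 : IPC ((conjList L).imp (a.imp δ)) := ih h'.ded
    have hh : IPCf ((a.and (conjList L)) ::ₘ 0) (a.and (conjList L)) := .hyp (by simp)
    have step : IPCf ((a.and (conjList L)) ::ₘ 0) δ := .mp (.mp (.thm h2) hh.andE2) hh.andE1
    exact step.ded.toIPC

theorem impConj {Γ : Multiset PropForm} {δ : PropForm} (h : IPCf Γ δ) :
    IPC ((ctxConj Γ).imp δ) :=
  conj_ded Γ.toList (by rwa [Multiset.coe_toList])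

/-- Disjunctive interpolation, by induction on cut-free sequent proofs. -/
theorem interp : ∀ {n : ℕ} {Γ : Multiset PropForm} {δ : PropForm}, SeqN n Γ δ →
    ∀ (ψ θ : PropForm), δ = ψ.or θ →
    ∃ I J : PropForm, I.vars ⊆ ctxVars Γ ∧ J.vars ⊆ ctxVars Γ ∧
      IPCf Γ (I.or J) ∧ IPC (I.imp ψ) ∧ IPC (J.imp θ) ∧
      ((∀ γ ∈ Γ, γ.IsMonotone) → I.IsMonotone ∧ J.IsMonotone) := by
  intro n Γ δ d
  induction d with
  | ax h => intro ψ θ heq; simp at heq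
  | botL h =>
    intro ψ θ heq
    refine ⟨.fls, .fls, by simp [PropForm.vars], by simp [PropForm.vars],
      .mp (.thm (.axFls _)) (.hyp h), .axFls ψ, .axFls θ, fun _ => ⟨trivial, trivial⟩⟩
  | topR => intro ψ θ heq; simp at heq
  | @andL _ Γ _ φ χ h p ih =>
    intro ψ θ heq
    obtain ⟨I, J, hIv, hJv, hD, hI, hJ, hM⟩ := ih ψ θ heq
    have hφ : φ.vars ⊆ ctxVars Γ := fun x hx =>
      vars_subset_ctxVars h (Finset.mem_union.mpr (Or.inl hx))
    have hχ : χ.vars ⊆ ctxVars Γ := fun x hx =>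
      vars_subset_ctxVars h (Finset.mem_union.mpr (Or.inr hx))
    have hsub : ctxVars (φ ::ₘ χ ::ₘ Γ) ⊆ ctxVars Γ := by
      refine subset_trans ?_ (ctxVars_cons_sub hχ)
      exact ctxVars_cons_sub (hφ.trans (ctxVars_sub_cons _ _))
    refine ⟨I, J, hIv.trans hsub, hJv.trans hsub,
      IPCf.cut2 (IPCf.hyp h).andE1 (IPCf.hyp h).andE2 hD, hI, hJ, ?_⟩
    intro hm
    refine hM ?_
    intro γ hγ
    rcases Multiset.mem_cons.mp hγ with rfl | hγ
    · exact (hm _ h).1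
    · rcases Multiset.mem_cons.mp hγ with rfl | hγ
      · exact (hm _ h).2
      · exact hm _ hγ
  | andR => intro ψ θ heq; simp at heq
  | @orL _ Γ _ φ χ h p q ih1 ih2 =>
    intro ψ θ heq
    obtain ⟨I1, J1, hI1v, hJ1v, hD1, hI1, hJ1, hM1⟩ := ih1 ψ θ heq
    obtain ⟨I2, J2, hI2v, hJ2v, hD2, hI2, hJ2, hM2⟩ := ih2 ψ θ heq
    have hφ : φ.vars ⊆ ctxVars Γ := fun x hx =>
      vars_subset_ctxVars h (Finset.mem_union.mpr (Or.inl hx))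
    have hχ : χ.vars ⊆ ctxVars Γ := fun x hx =>
      vars_subset_ctxVars h (Finset.mem_union.mpr (Or.inr hx))
    have hsub1 := ctxVars_cons_sub hφ
    have hsub2 := ctxVars_cons_sub hχ
    refine ⟨I1.or I2, J1.or J2, ?_, ?_, ?_, ?_, ?_, ?_⟩
    · intro x hx
      simp only [PropForm.vars, Finset.mem_union] at hx
      rcases hx with hx | hx
      exacts [hsub1 (hI1v hx), hsub2 (hI2v hx)]
    · intro x hx
      simp only [PropForm.vars, Finset.mem_union] at hx
      rcases hx with hx | hx
      exacts [hsub1 (hJ1v hx), hsub2 (hJ2v hx)]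
    · have c1 : IPC (I1.imp ((I1.or I2).or (J1.or J2))) :=
        IPC.comp (.axOrL I1 I2) (.axOrL _ _)
      have c2 : IPC (J1.imp ((I1.or I2).or (J1.or J2))) :=
        IPC.comp (.axOrL J1 J2) (.axOrR _ _)
      have c3 : IPC (I2.imp ((I1.or I2).or (J1.or J2))) :=
        IPC.comp (.axOrR I1 I2) (.axOrL _ _)
      have c4 : IPC (J2.imp ((I1.or I2).or (J1.or J2))) :=
        IPC.comp (.axOrR J1 J2) (.axOrR _ _)
      have t1 : IPCf (φ ::ₘ Γ) ((I1.or I2).or (J1.or J2)) :=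
        hD1.orE (.thm c1) (.thm c2)
      have t2 : IPCf (χ ::ₘ Γ) ((I1.or I2).or (J1.or J2)) :=
        hD2.orE (.thm c3) (.thm c4)
      exact (IPCf.hyp h).orE t1.ded t2.ded
    · exact .mp (.mp (.axOrE I1 I2 ψ) hI1) hI2
    · exact .mp (.mp (.axOrE J1 J2 θ) hJ1) hJ2
    · intro hm
      have m1 := hM1 (by
        intro γ hγ
        rcases Multiset.mem_cons.mp hγ with rfl | hγ
        · exact (hm _ h).1
        · exact hm _ hγ)
      have m2 := hM2 (by
        intro γ hγ
        rcases Multiset.mem_cons.mp hγ with rfl | hγ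
        · exact (hm _ h).2
        · exact hm _ hγ)
      exact ⟨⟨m1.1, m2.1⟩, ⟨m1.2, m2.2⟩⟩
  | @orR1 _ Γ φ χ p _ =>
    intro ψ θ heq
    injection heq with h1 h2
    subst h1; subst h2
    refine ⟨ctxConj Γ, .fls, le_of_eq (ctxConj_vars Γ), by simp [PropForm.vars],
      .mp (.thm (.axOrL _ _)) (ctxConj_self Γ), impConj (seqSound p), .axFls _,
      fun hm => ⟨ctxConj_mono hm, trivial⟩⟩
  | @orR2 _ Γ φ χ p _ =>
    intro ψ θ heq
    injection heq with h1 h2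
    subst h1; subst h2
    refine ⟨.fls, ctxConj Γ, by simp [PropForm.vars], le_of_eq (ctxConj_vars Γ),
      .mp (.thm (.axOrR _ _)) (ctxConj_self Γ), .axFls _, impConj (seqSound p),
      fun hm => ⟨trivial, ctxConj_mono hm⟩⟩
  | @impL _ Γ _ φ χ h p q _ ih2 =>
    intro ψ θ heq
    obtain ⟨I, J, hIv, hJv, hD, hI, hJ, hM⟩ := ih2 ψ θ heq
    have hχ : χ.vars ⊆ ctxVars Γ := fun x hx =>
      vars_subset_ctxVars h (Finset.mem_union.mpr (Or.inr hx))
    have hsub := ctxVars_cons_sub hχ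
    refine ⟨I, J, hIv.trans hsub, hJv.trans hsub,
      IPCf.cut1 (.mp (.hyp h) (seqSound p)) hD, hI, hJ, ?_⟩
    intro hm
    exact False.elim (hm _ h)
  | impR => intro ψ θ heq; simp at heq

end DisjInterp
/-- `IPC` has the (monotone) propositional disjunctive
interpolation property: from `IPC ⊢ φ → ψ ∨ θ` one gets `I, J` with variables
among those of `φ` such that `φ → I ∨ J`, `I → ψ` and `J → θ` are provable in
`IPC`; if `φ` is monotone, `I` and `J` can moreover be chosen monotone. -/
theorem IPC_disjunctive_interpolation (φ ψ θ : PropForm)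
    (h : IPC (φ.imp (ψ.or θ))) :
    (∃ I J : PropForm, I.vars ⊆ φ.vars ∧ J.vars ⊆ φ.vars ∧
      IPC (φ.imp (I.or J)) ∧ IPC (I.imp ψ) ∧ IPC (J.imp θ)) ∧
    (φ.IsMonotone →
      ∃ I J : PropForm, I.vars ⊆ φ.vars ∧ J.vars ⊆ φ.vars ∧
        I.IsMonotone ∧ J.IsMonotone ∧
        IPC (φ.imp (I.or J)) ∧ IPC (I.imp ψ) ∧ IPC (J.imp θ)) := by
  have h0 : DisjInterp.Seq 0 (φ.imp (ψ.or θ)) := DisjInterp.thmSeq h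
  have hid : DisjInterp.Seq ((φ.imp (ψ.or θ)) ::ₘ (φ ::ₘ 0)) (ψ.or θ) :=
    DisjInterp.Seq.impL (φ := φ) (χ := ψ.or θ) (by simp) (DisjInterp.Seq.id φ (by simp))
      (DisjInterp.Seq.id (ψ.or θ) (by simp))
  have hseq : DisjInterp.Seq (φ ::ₘ 0) (ψ.or θ) := by
    have := DisjInterp.cutSeq h0 hid
    simpa using this
  obtain ⟨n, d⟩ := hseq
  obtain ⟨I, J, hIv, hJv, hD, hI, hJ, hM⟩ := DisjInterp.interp d ψ θ rfl
  have hctx : DisjInterp.ctxVars (φ ::ₘ 0) = φ.vars := by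
    simp [DisjInterp.ctxVars]
  have hIJ : IPC (φ.imp (I.or J)) := hD.ded.toIPC
  constructor
  · exact ⟨I, J, hctx ▸ hIv, hctx ▸ hJv, hIJ, hI, hJ⟩
  · intro hmono
    obtain ⟨hMI, hMJ⟩ := hM (by
      intro γ hγ
      rcases Multiset.mem_cons.mp hγ with rfl | hγ
      · exact hmono
      · simp at hγ)
    exact ⟨I, J, hctx ▸ hIv, hctx ▸ hJv, hMI, hMJ, hIJ, hI, hJ⟩
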